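/- Let N, d, K be positive integers, let σ_1, …, σ_d : Fin N → Fin N be fixed-point-free involutions (permutations with σ_t ∘ σ_t = id and σ_t i ≠ i for all i), and for u : Fin N → Fin K and m, ℓ ∈ Fin K set Q_{m,ℓ}(u) = (1/N) ∑_{t=1}^d ∑_{i∈Fin N} 1{u i = m}·1{u(σ_t i) = ℓ}. Let n : Fin K → ℕ with ∑_k n_k = N, fix w : Fin N → Fin K whose fiber over each k has exactly n_k elements, let π be a uniformly distributed random permutation of Fin N, and set V = w ∘ π. Then for every ε > 0 there exist constants C, c > 0, depending only on ε and d (not on N, K, n, w, or the matchings), such that P( | Q_{m,ℓ}(V) − d·(n_m/N)·(n_ℓ/N) | > ε ) ≤ C·exp(−c N) for all m, ℓ ∈ Fin K. -/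

import Mathlib

open MeasureTheory ProbabilityTheory ENNReal

open Finset

namespace GapAux
variable {N : ℕ}

/-- Representatives of the pairs of a fixed-point-free involution. -/
def reps (τ : Fin N → Fin N) : Finset (Fin N) := univ.filter (fun i => i < τ i)

lemma mem_reps {τ : Fin N → Fin N} {i : Fin N} : i ∈ reps τ ↔ i < τ i := by
  simp [reps]

variable {τ : Fin N → Fin N} (hτ : ∀ i, τ (τ i) = i) (hτ' : ∀ i, τ i ≠ i)

include hτ hτ' in
lemma univ_eq_reps_union : (univ : Finset (Fin N)) = reps τ ∪ (reps τ).image τ := by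
  ext i
  simp only [mem_union, mem_image, mem_reps, mem_univ, true_iff]
  rcases lt_trichotomy i (τ i) with h | h | h
  · exact Or.inl h
  · exact absurd h.symm (hτ' i)
  · exact Or.inr ⟨τ i, by rw [hτ]; exact h, hτ i⟩

include hτ in
lemma disj_reps : Disjoint (reps τ) ((reps τ).image τ) := by
  rw [Finset.disjoint_left]
  intro a ha hb
  obtain ⟨b, hb2, rfl⟩ := Finset.mem_image.mp hb
  rw [mem_reps] at ha hb2
  rw [hτ] at ha
  exact absurd (ha.trans hb2) (lt_irrefl _)

include hτ in
lemma injOn_reps : Set.InjOn τ (reps τ) := fun a _ b _ hab => by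
  have := congrArg τ hab; rwa [hτ, hτ] at this

include hτ hτ' in
lemma prod_reps_split {M : Type*} [CommMonoid M] (f : Fin N → M) :
    ∏ i, f i = ∏ a ∈ reps τ, (f a * f (τ a)) := by
  rw [univ_eq_reps_union hτ hτ', Finset.prod_union (disj_reps hτ),
    Finset.prod_image (injOn_reps hτ), ← Finset.prod_mul_distrib]

include hτ hτ' in
lemma sum_reps_split {M : Type*} [AddCommMonoid M] (f : Fin N → M) :
    ∑ i, f i = ∑ a ∈ reps τ, (f a + f (τ a)) := by
  rw [univ_eq_reps_union hτ hτ', Finset.sum_union (disj_reps hτ),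
    Finset.sum_image (injOn_reps hτ), ← Finset.sum_add_distrib]

include hτ hτ' in
lemma card_reps : N = 2 * (reps τ).card := by
  have h := congrArg Finset.card (univ_eq_reps_union hτ hτ')
  rw [Finset.card_union_of_disjoint (disj_reps hτ),
    Finset.card_image_of_injOn (injOn_reps hτ), Finset.card_univ, Fintype.card_fin] at h
  omega

/-- Colorings of `Fin N` correspond to pair-colorings of the matching classes. -/
def pairEquiv (hτ : ∀ i, τ (τ i) = i) (hτ' : ∀ i, τ i ≠ i) :
    (Fin N → Fin 3) ≃ ({a // a ∈ reps τ} → Fin 3 × Fin 3) where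
  toFun c a := (c a.1, c (τ a.1))
  invFun h i :=
    if hi : i < τ i then (h ⟨i, mem_reps.mpr hi⟩).1
    else (h ⟨τ i, mem_reps.mpr (by
      rw [hτ]; exact lt_of_le_of_ne (not_lt.mp hi) (hτ' i))⟩).2
  left_inv c := by
    funext i
    dsimp only
    by_cases hi : i < τ i
    · rw [dif_pos hi]
    · rw [dif_neg hi]
      simp only [hτ]
  right_inv h := by
    funext a
    obtain ⟨i, hi⟩ := a
    have hi' : i < τ i := mem_reps.mp hi
    dsimp only
    refine Prod.ext ?_ ?_
    · dsimp only
      rw [dif_pos hi']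
    · dsimp only
      have hni : ¬ τ i < τ (τ i) := by rw [hτ]; exact not_lt.mpr (le_of_lt hi')
      rw [dif_neg hni]
      have key : ∀ (x y : {a // a ∈ reps τ}), x = y → (h x).2 = (h y).2 := by
        rintro x y rfl; rfl
      exact key _ _ (Subtype.ext (hτ i))

lemma sum_prod_pairs (hτ : ∀ i, τ (τ i) = i) (hτ' : ∀ i, τ i ≠ i)
    (H : Fin 3 → Fin 3 → ℝ) :
    ∑ c : Fin N → Fin 3, ∏ a ∈ reps τ, H (c a) (c (τ a))
      = ∏ a ∈ reps τ, (∑ p : Fin 3 × Fin 3, H p.1 p.2) := by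
  classical
  have h1 : ∀ c : Fin N → Fin 3,
      ∏ a ∈ reps τ, H (c a) (c (τ a))
        = ∏ a : {a // a ∈ reps τ}, H ((pairEquiv hτ hτ' c) a).1 ((pairEquiv hτ hτ' c) a).2 := by
    intro c
    rw [Finset.univ_eq_attach]
    rw [← Finset.prod_attach (reps τ) (fun a => H (c a) (c (τ a)))]
    simp only [pairEquiv, Equiv.coe_fn_mk]
  simp_rw [h1]
  rw [Equiv.sum_comp (pairEquiv hτ hτ') (fun h => ∏ a : {a // a ∈ reps τ}, H (h a).1 (h a).2)]
  rw [← Finset.prod_attach (reps τ) (fun _ => ∑ p : Fin 3 × Fin 3, H p.1 p.2),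
    ← Finset.univ_eq_attach]
  rw [Finset.prod_univ_sum (fun _ => (univ : Finset (Fin 3 × Fin 3)))
    (fun _ p => H p.1 p.2), Fintype.piFinset_univ]


/-- Chernoff bound for one matching, upper tail of a centered pair-sum. -/
lemma chernoff_core (hτ : ∀ i, τ (τ i) = i) (hτ' : ∀ i, τ i ≠ i)
    (ρ : Fin 3 → ℝ) (hρ0 : ∀ j, 0 ≤ ρ j) (hρ1 : ∑ j, ρ j = 1)
    (Y : Fin 3 → Fin 3 → ℝ) (hY : ∀ u v, |Y u v| ≤ 2)
    (hYmean : ∑ p : Fin 3 × Fin 3, ρ p.1 * ρ p.2 * Y p.1 p.2 = 0)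
    (δ : ℝ) (hδ : 0 < δ) (hδ1 : δ ≤ 1) :
    ∑ c ∈ univ.filter
        (fun c : Fin N → Fin 3 => δ * N < ∑ a ∈ reps τ, Y (c a) (c (τ a))),
      ∏ i, ρ (c i)
    ≤ Real.exp (-(δ^2) * N / 10) := by
  classical
  set s : ℝ := δ / 5 with hs
  have hs0 : 0 < s := by positivity
  have hWnn : ∀ c : Fin N → Fin 3, 0 ≤ ∏ i, ρ (c i) := fun c =>
    Finset.prod_nonneg fun i _ => hρ0 _
  -- Step 1: Chernoff / Markov
  have step1 :
      ∑ c ∈ univ.filter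
          (fun c : Fin N → Fin 3 => δ * N < ∑ a ∈ reps τ, Y (c a) (c (τ a))),
        ∏ i, ρ (c i)
      ≤ Real.exp (-(s * δ * N)) *
          ∑ c : Fin N → Fin 3, (∏ i, ρ (c i)) *
            Real.exp (s * ∑ a ∈ reps τ, Y (c a) (c (τ a))) := by
    rw [Finset.mul_sum]
    have mono1 : ∀ c ∈ univ.filter
          (fun c : Fin N → Fin 3 => δ * N < ∑ a ∈ reps τ, Y (c a) (c (τ a))),
        ∏ i, ρ (c i) ≤
          Real.exp (-(s * δ * N)) *
            ((∏ i, ρ (c i)) * Real.exp (s * ∑ a ∈ reps τ, Y (c a) (c (τ a)))) := by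
      intro c hc
      rw [Finset.mem_filter] at hc
      have h1 : (1:ℝ) ≤ Real.exp (-(s * δ * N)) *
          Real.exp (s * ∑ a ∈ reps τ, Y (c a) (c (τ a))) := by
        rw [← Real.exp_add]
        have h0 : (0:ℝ) ≤ -(s * δ * N) + s * ∑ a ∈ reps τ, Y (c a) (c (τ a)) := by
          nlinarith [mul_lt_mul_of_pos_left hc.2 hs0]
        calc (1:ℝ) = Real.exp 0 := Real.exp_zero.symm
          _ ≤ _ := Real.exp_le_exp.mpr h0
      have h2 := mul_le_mul_of_nonneg_left h1 (hWnn c)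
      nlinarith [h2]
    calc ∑ c ∈ univ.filter
          (fun c : Fin N → Fin 3 => δ * N < ∑ a ∈ reps τ, Y (c a) (c (τ a))),
        ∏ i, ρ (c i)
        ≤ ∑ c ∈ univ.filter
            (fun c : Fin N → Fin 3 => δ * N < ∑ a ∈ reps τ, Y (c a) (c (τ a))),
            Real.exp (-(s * δ * N)) *
              ((∏ i, ρ (c i)) * Real.exp (s * ∑ a ∈ reps τ, Y (c a) (c (τ a)))) :=
          Finset.sum_le_sum mono1
      _ ≤ ∑ c : Fin N → Fin 3,
            Real.exp (-(s * δ * N)) *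
              ((∏ i, ρ (c i)) * Real.exp (s * ∑ a ∈ reps τ, Y (c a) (c (τ a)))) := by
          apply Finset.sum_le_sum_of_subset_of_nonneg (Finset.filter_subset _ _)
          intro c _ _
          exact mul_nonneg (Real.exp_pos _).le
            (mul_nonneg (hWnn c) (Real.exp_pos _).le)
  -- Step 2: factorize the mgf
  have step2 :
      ∑ c : Fin N → Fin 3, (∏ i, ρ (c i)) *
          Real.exp (s * ∑ a ∈ reps τ, Y (c a) (c (τ a)))
        = ∏ _a ∈ reps τ,
            (∑ p : Fin 3 × Fin 3, ρ p.1 * ρ p.2 * Real.exp (s * Y p.1 p.2)) := by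
    have hsplit : ∀ c : Fin N → Fin 3,
        (∏ i, ρ (c i)) * Real.exp (s * ∑ a ∈ reps τ, Y (c a) (c (τ a)))
          = ∏ a ∈ reps τ, (ρ (c a) * ρ (c (τ a)) * Real.exp (s * Y (c a) (c (τ a)))) := by
      intro c
      rw [prod_reps_split hτ hτ' (fun i => ρ (c i)), Finset.mul_sum, Real.exp_sum,
        ← Finset.prod_mul_distrib]
    simp_rw [hsplit]
    exact sum_prod_pairs hτ hτ' (fun u v => ρ u * ρ v * Real.exp (s * Y u v))
  -- Step 3: bound the per-pair mgf
  have hrr1 : ∑ p : Fin 3 × Fin 3, ρ p.1 * ρ p.2 = 1 := by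
    rw [Fintype.sum_prod_type]
    simp_rw [← Finset.mul_sum]
    rw [← Finset.sum_mul, hρ1, one_mul]
  have step3 :
      (∑ p : Fin 3 × Fin 3, ρ p.1 * ρ p.2 * Real.exp (s * Y p.1 p.2))
        ≤ Real.exp (5 * s^2) := by
    have hexp : ∀ u v, Real.exp (s * Y u v) ≤ 1 + s * (Y u v) + (5/4) * (s * Y u v)^2 := by
      intro u v
      have habs : |s * Y u v| ≤ 1 := by
        rw [abs_mul, abs_of_pos hs0]
        have h2 : |Y u v| ≤ 2 := hY u v
        have habs0 : 0 ≤ |Y u v| := abs_nonneg _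
        nlinarith
      have hb := Real.exp_bound habs (n := 2) (by norm_num)
      have hsum : ∑ m ∈ range 2, (s * Y u v) ^ m / (m.factorial : ℝ) = 1 + s * Y u v := by
        simp [Finset.sum_range_succ]
      rw [hsum] at hb
      have hb2 := (abs_le.mp hb).2
      have h35 : |s * Y u v| ^ 2 * (((2:ℕ).succ : ℝ) / ((2:ℕ).factorial * (2:ℕ)))
          = (3/4) * (s * Y u v)^2 := by
        rw [sq_abs]
        norm_num [Nat.factorial]
        ring
      rw [h35] at hb2
      nlinarith [hb2]
    calc ∑ p : Fin 3 × Fin 3, ρ p.1 * ρ p.2 * Real.exp (s * Y p.1 p.2)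
        ≤ ∑ p : Fin 3 × Fin 3, ρ p.1 * ρ p.2 *
            (1 + s * Y p.1 p.2 + (5/4) * (s * Y p.1 p.2)^2) := by
          apply Finset.sum_le_sum
          intro p _
          exact mul_le_mul_of_nonneg_left (hexp p.1 p.2)
            (mul_nonneg (hρ0 _) (hρ0 _))
      _ = 1 + (5/4) * s^2 *
            (∑ p : Fin 3 × Fin 3, ρ p.1 * ρ p.2 * (Y p.1 p.2)^2) := by
          simp_rw [mul_add, mul_one]
          rw [Finset.sum_add_distrib, Finset.sum_add_distrib, hrr1]
          have e1 : ∑ p : Fin 3 × Fin 3, ρ p.1 * ρ p.2 * (s * Y p.1 p.2) = 0 := by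
            have e0 : ∑ p : Fin 3 × Fin 3, ρ p.1 * ρ p.2 * (s * Y p.1 p.2)
                = s * ∑ p : Fin 3 × Fin 3, ρ p.1 * ρ p.2 * Y p.1 p.2 := by
              rw [Finset.mul_sum]; apply Finset.sum_congr rfl; intro p _; ring
            rw [e0, hYmean, mul_zero]
          have e2 : ∑ p : Fin 3 × Fin 3, ρ p.1 * ρ p.2 * (5/4 * (s * Y p.1 p.2)^2)
              = (5/4)*s^2 * ∑ p : Fin 3 × Fin 3, ρ p.1 * ρ p.2 * (Y p.1 p.2)^2 := by
            rw [Finset.mul_sum]; apply Finset.sum_congr rfl; intro p _; ring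
          rw [e1, e2]; ring
      _ ≤ 1 + 5 * s^2 := by
          have hsum4 : ∑ p : Fin 3 × Fin 3, ρ p.1 * ρ p.2 * (Y p.1 p.2)^2
              ≤ ∑ p : Fin 3 × Fin 3, ρ p.1 * ρ p.2 * 4 := by
            apply Finset.sum_le_sum
            intro p _
            have hy4 : (Y p.1 p.2)^2 ≤ 4 := by
              have := abs_le.mp (hY p.1 p.2)
              nlinarith [this.1, this.2]
            exact mul_le_mul_of_nonneg_left hy4 (mul_nonneg (hρ0 _) (hρ0 _))
          rw [← Finset.sum_mul, hrr1, one_mul] at hsum4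
          nlinarith [hs0, hsum4]
      _ ≤ Real.exp (5 * s^2) := by
          have := Real.add_one_le_exp (5 * s^2)
          linarith
  -- Step 4: combine
  have hZnn : (0:ℝ) ≤ ∑ p : Fin 3 × Fin 3, ρ p.1 * ρ p.2 * Real.exp (s * Y p.1 p.2) := by
    apply Finset.sum_nonneg
    intro p _
    exact mul_nonneg (mul_nonneg (hρ0 _) (hρ0 _)) (Real.exp_pos _).le
  have step4 :
      (∏ _a ∈ reps τ,
          (∑ p : Fin 3 × Fin 3, ρ p.1 * ρ p.2 * Real.exp (s * Y p.1 p.2)))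
        ≤ Real.exp (5 * s^2 * (reps τ).card) := by
    rw [Finset.prod_const]
    calc (∑ p : Fin 3 × Fin 3, ρ p.1 * ρ p.2 * Real.exp (s * Y p.1 p.2)) ^ (reps τ).card
        ≤ (Real.exp (5 * s^2)) ^ (reps τ).card := pow_le_pow_left₀ hZnn step3 _
      _ = Real.exp (5 * s^2 * (reps τ).card) := by
          rw [← Real.exp_nat_mul]
          ring_nf
  have hNcard : (N : ℝ) = 2 * ((reps τ).card : ℝ) := by
    exact_mod_cast card_reps hτ hτ'
  calc ∑ c ∈ univ.filter
        (fun c : Fin N → Fin 3 => δ * N < ∑ a ∈ reps τ, Y (c a) (c (τ a))),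
      ∏ i, ρ (c i)
      ≤ Real.exp (-(s * δ * N)) *
          ∑ c : Fin N → Fin 3, (∏ i, ρ (c i)) *
            Real.exp (s * ∑ a ∈ reps τ, Y (c a) (c (τ a))) := step1
    _ ≤ Real.exp (-(s * δ * N)) * Real.exp (5 * s^2 * (reps τ).card) := by
        rw [step2]
        exact mul_le_mul_of_nonneg_left step4 (Real.exp_pos _).le
    _ = Real.exp (-(s * δ * N) + 5 * s^2 * (reps τ).card) := (Real.exp_add _ _).symm
    _ ≤ Real.exp (-(δ^2) * N / 10) := by
        apply Real.exp_le_exp.mpr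
        have hcard : ((reps τ).card : ℝ) = (N:ℝ) / 2 := by rw [hNcard]; ring
        rw [hcard, hs]
        have hN0 : (0:ℝ) ≤ N := Nat.cast_nonneg N
        nlinarith [hδ, hN0]


lemma sum_biUnion_le' {ι β : Type*} [DecidableEq β] (s : Finset ι) (B : ι → Finset β)
    (f : β → ℝ) (hf : ∀ b, 0 ≤ f b) :
    ∑ b ∈ s.biUnion B, f b ≤ ∑ t ∈ s, ∑ b ∈ B t, f b := by
  classical
  induction s using Finset.induction with
  | empty => simp
  | @insert a s ha ih =>
    rw [Finset.biUnion_insert, Finset.sum_insert ha]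
    have h1 : ∑ b ∈ B a ∪ s.biUnion B, f b ≤ ∑ b ∈ B a, f b + ∑ b ∈ s.biUnion B, f b := by
      have := Finset.sum_union_inter (s₁ := B a) (s₂ := s.biUnion B) (f := f)
      have h2 : 0 ≤ ∑ b ∈ B a ∩ s.biUnion B, f b := Finset.sum_nonneg fun b _ => hf b
      linarith
    linarith [ih]

/-- Concentration at the coloring level, for the union of `d` matchings. -/
lemma coloring_bound {d : ℕ} (hN : 0 < N) (hd : 0 < d) (σ : Fin d → Fin N → Fin N)
    (hσ : ∀ t i, σ t (σ t i) = i) (hσ' : ∀ t i, σ t i ≠ i)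
    (ρ : Fin 3 → ℝ) (hρ0 : ∀ j, 0 ≤ ρ j) (hρ1 : ∑ j, ρ j = 1)
    (x y : Fin 3) (ε : ℝ) (hε : 0 < ε) :
    ∑ c ∈ univ.filter (fun c : Fin N → Fin 3 => ε <
        |(1/(N:ℝ)) * (∑ t : Fin d, ∑ i : Fin N,
            (if c i = x then (1:ℝ) else 0) * (if c (σ t i) = y then (1:ℝ) else 0))
          - (d:ℝ) * (ρ x * ρ y)|),
      ∏ i, ρ (c i)
    ≤ 2 * d * Real.exp (-(ε^2/(d:ℝ)^2) * N / 10) := by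
  classical
  set F : Fin 3 → ℝ := fun u => if u = x then (1:ℝ) else 0 with hF
  set G : Fin 3 → ℝ := fun u => if u = y then (1:ℝ) else 0 with hG
  set α : ℝ := ρ x * ρ y with hα
  set Y : Fin 3 → Fin 3 → ℝ := fun u v => F u * G v + F v * G u - 2 * α with hY
  have hFbd : ∀ u, 0 ≤ F u ∧ F u ≤ 1 := by
    intro u; constructor <;> simp only [hF] <;> split <;> norm_num
  have hGbd : ∀ u, 0 ≤ G u ∧ G u ≤ 1 := by
    intro u; constructor <;> simp only [hG] <;> split <;> norm_num
  have hρle1 : ∀ j, ρ j ≤ 1 := by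
    intro j
    rw [← hρ1]
    exact Finset.single_le_sum (fun j _ => hρ0 j) (Finset.mem_univ j)
  have hα01 : 0 ≤ α ∧ α ≤ 1 :=
    ⟨mul_nonneg (hρ0 _) (hρ0 _), by nlinarith [hρ0 x, hρ0 y, hρle1 x, hρle1 y]⟩
  have hYbd : ∀ u v, |Y u v| ≤ 2 := by
    intro u v
    rw [abs_le, hY]
    constructor <;> simp only [] <;>
      nlinarith [(hFbd u).1, (hFbd u).2, (hFbd v).1, (hFbd v).2,
        (hGbd u).1, (hGbd u).2, (hGbd v).1, (hGbd v).2, hα01.1, hα01.2]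
  have hFmean : ∑ u, ρ u * F u = ρ x := by
    simp [hF, Finset.sum_ite_eq', mul_comm]
  have hGmean : ∑ u, ρ u * G u = ρ y := by
    simp [hG, Finset.sum_ite_eq', mul_comm]
  have hYmean : ∑ p : Fin 3 × Fin 3, ρ p.1 * ρ p.2 * Y p.1 p.2 = 0 := by
    have hrr1 : ∑ p : Fin 3 × Fin 3, ρ p.1 * ρ p.2 = 1 := by
      rw [Fintype.sum_prod_type]
      simp_rw [← Finset.mul_sum]
      rw [← Finset.sum_mul, hρ1, one_mul]
    have h1 : ∑ p : Fin 3 × Fin 3, ρ p.1 * ρ p.2 * (F p.1 * G p.2) = α := by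
      rw [Fintype.sum_prod_type]
      have : ∀ u : Fin 3, ∑ v : Fin 3, ρ u * ρ v * (F u * G v)
          = (ρ u * F u) * (ρ y) := by
        intro u
        rw [← hGmean, Finset.mul_sum]
        apply Finset.sum_congr rfl
        intro v _
        ring
      simp_rw [this]
      rw [← Finset.sum_mul, hFmean, hα]
    have h2 : ∑ p : Fin 3 × Fin 3, ρ p.1 * ρ p.2 * (F p.2 * G p.1) = α := by
      rw [Fintype.sum_prod_type]
      have : ∀ u : Fin 3, ∑ v : Fin 3, ρ u * ρ v * (F v * G u)
          = (ρ u * G u) * (ρ x) := by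
        intro u
        rw [← hFmean, Finset.mul_sum]
        apply Finset.sum_congr rfl
        intro v _
        ring
      simp_rw [this]
      rw [← Finset.sum_mul, hGmean, hα]
      ring
    have expand : ∀ p : Fin 3 × Fin 3, ρ p.1 * ρ p.2 * Y p.1 p.2
        = ρ p.1 * ρ p.2 * (F p.1 * G p.2) + ρ p.1 * ρ p.2 * (F p.2 * G p.1)
          - 2 * α * (ρ p.1 * ρ p.2) := by
      intro p
      simp only [hY]
      ring
    simp_rw [expand]
    rw [Finset.sum_sub_distrib, Finset.sum_add_distrib, h1, h2, ← Finset.mul_sum, hrr1]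
    ring
  -- rewriting each matching sum in pair form
  have hpair : ∀ (c : Fin N → Fin 3) (t : Fin d),
      ∑ i : Fin N, F (c i) * G (c (σ t i))
        = (∑ a ∈ reps (σ t), Y (c a) (c (σ t a))) + (N:ℝ) * α := by
    intro c t
    rw [sum_reps_split (hσ t) (hσ' t) (fun i => F (c i) * G (c (σ t i)))]
    have : ∀ a, F (c a) * G (c (σ t a)) + F (c (σ t a)) * G (c (σ t (σ t a)))
        = Y (c a) (c (σ t a)) + 2 * α := by
      intro a
      rw [hσ t a]
      simp only [hY]
      ring
    simp_rw [this]
    rw [Finset.sum_add_distrib, Finset.sum_const, nsmul_eq_mul]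
    have hNc : (N : ℝ) = 2 * ((reps (σ t)).card : ℝ) := by
      exact_mod_cast card_reps (hσ t) (hσ' t)
    rw [hNc]
    ring
  have hWnn : ∀ c : Fin N → Fin 3, 0 ≤ ∏ i, ρ (c i) := fun c =>
    Finset.prod_nonneg fun i _ => hρ0 _
  rcases le_or_gt ε (d:ℝ) with hεd | hεd
  · -- main case : ε ≤ d
    set δ : ℝ := ε / d with hδdef
    have hδ0 : 0 < δ := by positivity
    have hδ1 : δ ≤ 1 := by
      rw [hδdef, div_le_one (by exact_mod_cast hd)]
      exact hεd
    -- inclusion into union of tails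
    set Bad : Finset (Fin N → Fin 3) := univ.filter (fun c : Fin N → Fin 3 => ε <
        |(1/(N:ℝ)) * (∑ t : Fin d, ∑ i : Fin N,
            (if c i = x then (1:ℝ) else 0) * (if c (σ t i) = y then (1:ℝ) else 0))
          - (d:ℝ) * (ρ x * ρ y)|) with hBad
    set Up : Fin d → Finset (Fin N → Fin 3) := fun t => univ.filter
      (fun c : Fin N → Fin 3 => δ * N < ∑ a ∈ reps (σ t), Y (c a) (c (σ t a))) with hUp
    set Lo : Fin d → Finset (Fin N → Fin 3) := fun t => univ.filter
      (fun c : Fin N → Fin 3 => δ * N < ∑ a ∈ reps (σ t), -Y (c a) (c (σ t a))) with hLo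
    have hNR : (0:ℝ) < N := by exact_mod_cast hN
    have hsubset : Bad ⊆ Finset.biUnion univ (fun t => Up t ∪ Lo t) := by
      intro c hc
      rw [hBad, Finset.mem_filter] at hc
      by_contra hcon
      simp only [Finset.mem_biUnion, Finset.mem_univ, exists_true_left, not_exists,
        Finset.mem_union, hUp, hLo, Finset.mem_filter, true_and, not_or, not_lt] at hcon
      have hbound : ∀ t : Fin d, |∑ a ∈ reps (σ t), Y (c a) (c (σ t a))| ≤ δ * N := by
        intro t
        rcases hcon t with ⟨h1, h2⟩
        rw [abs_le]
        constructor
        · rw [Finset.sum_neg_distrib] at h2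
          linarith
        · exact h1
      have hsum : |∑ t : Fin d, ∑ a ∈ reps (σ t), Y (c a) (c (σ t a))| ≤ (d:ℝ) * (δ * N) := by
        calc |∑ t : Fin d, ∑ a ∈ reps (σ t), Y (c a) (c (σ t a))|
            ≤ ∑ t : Fin d, |∑ a ∈ reps (σ t), Y (c a) (c (σ t a))| :=
              Finset.abs_sum_le_sum_abs _ _
          _ ≤ ∑ _t : Fin d, δ * N := Finset.sum_le_sum (fun t _ => hbound t)
          _ = (d:ℝ) * (δ * N) := by rw [Finset.sum_const]; simp [mul_comm]
      -- now contradict hc.2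
      have hrw : (1/(N:ℝ)) * (∑ t : Fin d, ∑ i : Fin N,
            (if c i = x then (1:ℝ) else 0) * (if c (σ t i) = y then (1:ℝ) else 0))
          - (d:ℝ) * (ρ x * ρ y)
          = (1/(N:ℝ)) * ∑ t : Fin d, ∑ a ∈ reps (σ t), Y (c a) (c (σ t a))
            + ((1/(N:ℝ)) * ((d:ℝ) * ((N:ℝ) * α)) - (d:ℝ) * α) := by
        have : ∀ t : Fin d, ∑ i : Fin N,
            (if c i = x then (1:ℝ) else 0) * (if c (σ t i) = y then (1:ℝ) else 0)
            = (∑ a ∈ reps (σ t), Y (c a) (c (σ t a))) + (N:ℝ) * α := fun t => hpair c t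
        simp_rw [this]
        rw [Finset.sum_add_distrib, Finset.sum_const]
        simp only [Finset.card_univ, Fintype.card_fin, nsmul_eq_mul, hα]
        ring
      have hNne : (N:ℝ) ≠ 0 := ne_of_gt hNR
      have hdne : (d:ℝ) ≠ 0 := by
        have : (0:ℝ) < d := by exact_mod_cast hd
        exact ne_of_gt this
      have hNα : (1/(N:ℝ)) * ((d:ℝ) * ((N:ℝ) * α)) - (d:ℝ) * α = 0 := by
        field_simp
        try ring
      rw [hrw, hNα, add_zero, abs_mul, abs_of_pos (one_div_pos.mpr hNR)] at hc
      have hfin : (1/(N:ℝ)) * |∑ t : Fin d, ∑ a ∈ reps (σ t), Y (c a) (c (σ t a))|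
          ≤ (1/(N:ℝ)) * ((d:ℝ) * (δ * N)) :=
        mul_le_mul_of_nonneg_left hsum (le_of_lt (one_div_pos.mpr hNR))
      have heq : (1/(N:ℝ)) * ((d:ℝ) * (δ * N)) = ε := by
        rw [hδdef]
        field_simp
      linarith [hc.2]
    -- sum over Bad ≤ sum over union
    have hstep : ∑ c ∈ Bad, ∏ i, ρ (c i)
        ≤ ∑ t : Fin d, ∑ c ∈ Up t ∪ Lo t, ∏ i, ρ (c i) := by
      calc ∑ c ∈ Bad, ∏ i, ρ (c i)
          ≤ ∑ c ∈ Finset.biUnion univ (fun t => Up t ∪ Lo t), ∏ i, ρ (c i) :=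
            Finset.sum_le_sum_of_subset_of_nonneg hsubset (fun c _ _ => hWnn c)
        _ ≤ ∑ t : Fin d, ∑ c ∈ Up t ∪ Lo t, ∏ i, ρ (c i) :=
            sum_biUnion_le' univ _ _ hWnn
    have htail : ∀ t : Fin d, ∑ c ∈ Up t ∪ Lo t, ∏ i, ρ (c i)
        ≤ 2 * Real.exp (-(δ^2) * N / 10) := by
      intro t
      have hup : ∑ c ∈ Up t, ∏ i, ρ (c i) ≤ Real.exp (-(δ^2) * N / 10) :=
        chernoff_core (hσ t) (hσ' t) ρ hρ0 hρ1 Y hYbd hYmean δ hδ0 hδ1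
      have hlo : ∑ c ∈ Lo t, ∏ i, ρ (c i) ≤ Real.exp (-(δ^2) * N / 10) := by
        have hYmean' : ∑ p : Fin 3 × Fin 3, ρ p.1 * ρ p.2 * (-Y p.1 p.2) = 0 := by
          simp_rw [mul_neg]
          rw [Finset.sum_neg_distrib, hYmean, neg_zero]
        have hYbd' : ∀ u v, |(-Y u v)| ≤ 2 := by
          intro u v; rw [abs_neg]; exact hYbd u v
        exact chernoff_core (hσ t) (hσ' t) ρ hρ0 hρ1 (fun u v => -Y u v) hYbd' hYmean' δ hδ0 hδ1
      have hsplit : ∑ c ∈ Up t ∪ Lo t, ∏ i, ρ (c i)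
          ≤ ∑ c ∈ Up t, ∏ i, ρ (c i) + ∑ c ∈ Lo t, ∏ i, ρ (c i) := by
        have := Finset.sum_union_inter (s₁ := Up t) (s₂ := Lo t)
          (f := fun c : Fin N → Fin 3 => ∏ i, ρ (c i))
        have h2 : 0 ≤ ∑ c ∈ Up t ∩ Lo t, ∏ i, ρ (c i) :=
          Finset.sum_nonneg fun c _ => hWnn c
        linarith
      linarith
    have hδe : δ^2 = ε^2/(d:ℝ)^2 := by
      rw [hδdef]
      ring
    calc ∑ c ∈ Bad, ∏ i, ρ (c i)
        ≤ ∑ t : Fin d, ∑ c ∈ Up t ∪ Lo t, ∏ i, ρ (c i) := hstep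
      _ ≤ ∑ _t : Fin d, 2 * Real.exp (-(δ^2) * N / 10) :=
          Finset.sum_le_sum (fun t _ => htail t)
      _ = 2 * d * Real.exp (-(ε^2/(d:ℝ)^2) * N / 10) := by
          rw [Finset.sum_const, hδe]
          simp only [Finset.card_univ, Fintype.card_fin, nsmul_eq_mul]
          ring
  · -- degenerate case : d < ε, the bad set is empty
    have hempty : univ.filter (fun c : Fin N → Fin 3 => ε <
        |(1/(N:ℝ)) * (∑ t : Fin d, ∑ i : Fin N,
            (if c i = x then (1:ℝ) else 0) * (if c (σ t i) = y then (1:ℝ) else 0))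
          - (d:ℝ) * (ρ x * ρ y)|) = ∅ := by
      rw [Finset.filter_eq_empty_iff]
      intro c _
      rw [not_lt]
      have hsum_bd : ∀ t : Fin d, 0 ≤ (∑ i : Fin N,
            (if c i = x then (1:ℝ) else 0) * (if c (σ t i) = y then (1:ℝ) else 0))
          ∧ (∑ i : Fin N,
            (if c i = x then (1:ℝ) else 0) * (if c (σ t i) = y then (1:ℝ) else 0)) ≤ N := by
        intro t
        constructor
        · apply Finset.sum_nonneg
          intro i _
          split <;> split <;> norm_num
        · calc (∑ i : Fin N,
              (if c i = x then (1:ℝ) else 0) * (if c (σ t i) = y then (1:ℝ) else 0))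
              ≤ ∑ _i : Fin N, (1:ℝ) := by
                apply Finset.sum_le_sum
                intro i _
                split <;> split <;> norm_num
            _ = N := by simp
      have h0 : 0 ≤ (1/(N:ℝ)) * (∑ t : Fin d, ∑ i : Fin N,
            (if c i = x then (1:ℝ) else 0) * (if c (σ t i) = y then (1:ℝ) else 0)) := by
        apply mul_nonneg (by positivity)
        exact Finset.sum_nonneg fun t _ => (hsum_bd t).1
      have h1 : (1/(N:ℝ)) * (∑ t : Fin d, ∑ i : Fin N,
            (if c i = x then (1:ℝ) else 0) * (if c (σ t i) = y then (1:ℝ) else 0)) ≤ d := by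
        rcases Nat.eq_zero_or_pos N with hN | hN
        · subst hN
          simp
        · have hNR : (0:ℝ) < N := by exact_mod_cast hN
          have : (∑ t : Fin d, ∑ i : Fin N,
              (if c i = x then (1:ℝ) else 0) * (if c (σ t i) = y then (1:ℝ) else 0))
              ≤ ∑ _t : Fin d, (N:ℝ) := Finset.sum_le_sum (fun t _ => (hsum_bd t).2)
          rw [Finset.sum_const] at this
          simp only [Finset.card_univ, Fintype.card_fin, nsmul_eq_mul] at this
          rw [div_mul_eq_mul_div, one_mul, div_le_iff₀ hNR]
          calc (∑ t : Fin d, ∑ i : Fin N,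
              (if c i = x then (1:ℝ) else 0) * (if c (σ t i) = y then (1:ℝ) else 0))
              ≤ (d:ℝ) * N := this
            _ = (d:ℝ) * N := rfl
      have h2 : 0 ≤ (d:ℝ) * (ρ x * ρ y) :=
        mul_nonneg (Nat.cast_nonneg d) (mul_nonneg (hρ0 x) (hρ0 y))
      have h3 : (d:ℝ) * (ρ x * ρ y) ≤ d := by
        have hdd : (0:ℝ) ≤ d := Nat.cast_nonneg d
        nlinarith [hα01.1, hα01.2]
      rw [abs_le]
      constructor <;> [linarith ; linarith]
    rw [hempty]
    simp only [Finset.sum_empty]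
    positivity


/-! ### Counting permutations via colorings -/

def cnt (c : Fin N → Fin 3) (j : Fin 3) : ℕ := (univ.filter fun i => c i = j).card

lemma sum_cnt (c : Fin N → Fin 3) : ∑ j, cnt c j = N := by
  classical
  have := Finset.card_eq_sum_card_fiberwise
    (f := c) (s := (univ : Finset (Fin N))) (t := (univ : Finset (Fin 3)))
    (fun i _ => Finset.mem_univ _)
  simpa [cnt] using this.symm

lemma cnt_le (c : Fin N → Fin 3) (j : Fin 3) : cnt c j ≤ N := by
  classical
  calc cnt c j ≤ (univ : Finset (Fin N)).card := Finset.card_filter_le _ _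
    _ = N := by simp

lemma cnt_comp_perm (g : Fin N → Fin 3) (e : Equiv.Perm (Fin N)) (j : Fin 3) :
    cnt (g ∘ e) j = cnt g j := by
  classical
  apply Finset.card_bij (fun i _ => e i)
  · intro i hi
    rw [Finset.mem_filter] at hi ⊢
    exact ⟨Finset.mem_univ _, hi.2⟩
  · intro i _ i' _ h
    exact e.injective h
  · intro i' hi'
    rw [Finset.mem_filter] at hi'
    refine ⟨e.symm i', ?_, by simp⟩
    rw [Finset.mem_filter]
    refine ⟨Finset.mem_univ _, ?_⟩
    simpa [Function.comp] using hi'.2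

lemma weight_eq (ρ : Fin 3 → ℝ) (c : Fin N → Fin 3) :
    ∏ i, ρ (c i) = ∏ j, ρ j ^ (cnt c j) := by
  classical
  rw [← Finset.prod_fiberwise_of_maps_to (g := c) (t := (univ : Finset (Fin 3)))
    (fun i _ => Finset.mem_univ _) (fun i => ρ (c i))]
  apply Finset.prod_congr rfl
  intro j _
  have hcongr : ∀ i ∈ univ.filter fun i => c i = j, ρ (c i) = ρ j := by
    intro i hi
    rw [Finset.mem_filter] at hi
    rw [hi.2]
  rw [Finset.prod_congr rfl hcongr, Finset.prod_const]
  rfl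

/-- The set of permutations carrying one coloring to another of the same counts
    has cardinality `∏ j (cnt j)!`. -/
lemma fiber_card (g c : Fin N → Fin 3) (h : ∀ j, cnt g j = cnt c j) :
    (univ.filter fun e : Equiv.Perm (Fin N) => g ∘ e = c).card
      = ∏ j, (cnt c j).factorial := by
  classical
  rw [← Fintype.card_subtype]
  have e1 : {e : Equiv.Perm (Fin N) // g ∘ e = c}
      ≃ {e : Equiv.Perm (Fin N) // ∀ i, g (e i) = c i} :=
    Equiv.subtypeEquivRight (fun e => by
      constructor
      · intro he i; exact congrFun he i
      · intro he; funext i; exact he i)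
  have e2 : {e : Equiv.Perm (Fin N) // ∀ i, g (e i) = c i}
      ≃ (∀ j : Fin 3, {i // c i = j} ≃ {i // g i = j}) := by
    refine
      { toFun := fun e j => Equiv.subtypeEquiv e.1 (fun i => ?_)
        invFun := fun F =>
          ⟨(Equiv.sigmaFiberEquiv c).symm.trans
            ((Equiv.sigmaCongrRight F).trans (Equiv.sigmaFiberEquiv g)), ?_⟩
        left_inv := ?_
        right_inv := ?_ }
    · constructor
      · intro hci; rw [← hci]; exact (e.2 i).symm ▸ (e.2 i)
      · intro hgi; rw [← e.2 i]; exact hgi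
    · intro i
      exact (F (c i) ⟨i, rfl⟩).2
    · intro e
      apply Subtype.ext
      apply Equiv.ext
      intro i
      rfl
    · intro F
      funext j
      apply Equiv.ext
      intro i
      obtain ⟨i, hi⟩ := i
      apply Subtype.ext
      dsimp [Equiv.sigmaFiberEquiv, Equiv.sigmaCongrRight, Equiv.subtypeEquiv]
      subst hi
      rfl
  rw [Fintype.card_congr (e1.trans e2), Fintype.card_pi]
  apply Finset.prod_congr rfl
  intro j _
  have hcard : Fintype.card {i // c i = j} = Fintype.card {i // g i = j} := by
    rw [Fintype.card_subtype, Fintype.card_subtype]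
    exact (h j).symm
  rw [Fintype.card_equiv (Fintype.equivOfCardEq hcard), Fintype.card_subtype]
  rfl

/-- Counting bad permutations through the induced coloring. -/
lemma perm_count (g : Fin N → Fin 3) (P : (Fin N → Fin 3) → Prop) [DecidablePred P] :
    ((univ.filter fun e : Equiv.Perm (Fin N) => P (g ∘ e)).card : ℕ)
      = (univ.filter fun c : Fin N → Fin 3 => (∀ j, cnt c j = cnt g j) ∧ P c).card
          * ∏ j, (cnt g j).factorial := by
  classical
  rw [Finset.card_eq_sum_card_fiberwise
    (f := fun e : Equiv.Perm (Fin N) => g ∘ e)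
    (t := univ.filter fun c : Fin N → Fin 3 => (∀ j, cnt c j = cnt g j) ∧ P c)
    (fun e he => by
      rw [Finset.mem_coe, Finset.mem_filter] at he ⊢
      exact ⟨Finset.mem_univ _, fun j => cnt_comp_perm g e j, he.2⟩)]
  rw [Finset.sum_congr rfl (fun c hc => ?_), Finset.sum_const, smul_eq_mul]
  rw [Finset.mem_filter] at hc
  have hfilter : Finset.filter (fun e : Equiv.Perm (Fin N) => g ∘ ⇑e = c)
        (univ.filter fun e : Equiv.Perm (Fin N) => P (g ∘ e))
      = univ.filter fun e : Equiv.Perm (Fin N) => g ∘ e = c := by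
    ext e
    simp only [Finset.mem_filter, Finset.mem_univ, true_and]
    constructor
    · rintro ⟨_, h2⟩; exact h2
    · intro h2; exact ⟨by rw [h2]; exact hc.2.2, h2⟩
  rw [hfilter, fiber_card g c (fun j => (hc.2.1 j).symm)]
  apply Finset.prod_congr rfl
  intro j _
  rw [hc.2.1 j]

/-- Per-coordinate factorial–power inequality. -/
lemma nat_fact_pow (n a : ℕ) : n.factorial * n ^ a ≤ a.factorial * n ^ n := by
  rcases le_total a n with h | h
  · obtain ⟨k, rfl⟩ := Nat.le.dest h
    have claim : ∀ k : ℕ, (a + k).factorial ≤ a.factorial * (a + k) ^ k := by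
      intro k
      induction k with
      | zero => simp
      | succ k ih =>
        calc (a + (k+1)).factorial = (a + k + 1) * (a + k).factorial := by
              rw [← Nat.add_assoc, Nat.factorial_succ]
          _ ≤ (a + k + 1) * (a.factorial * (a + k) ^ k) :=
              Nat.mul_le_mul_left _ ih
          _ ≤ (a + k + 1) * (a.factorial * (a + k + 1) ^ k) := by
              apply Nat.mul_le_mul_left
              apply Nat.mul_le_mul_left
              exact Nat.pow_le_pow_left (Nat.le_succ _) k
          _ = a.factorial * (a + (k+1)) ^ (k+1) := by ring
    calc (a + k).factorial * (a + k) ^ a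
        ≤ (a.factorial * (a + k) ^ k) * (a + k) ^ a :=
          Nat.mul_le_mul_right _ (claim k)
      _ = a.factorial * (a + k) ^ (a + k) := by rw [mul_assoc, ← pow_add]; ring_nf
  · obtain ⟨k, rfl⟩ := Nat.le.dest h
    have claim : ∀ k : ℕ, n ^ k * n.factorial ≤ (n + k).factorial := by
      intro k
      induction k with
      | zero => simp
      | succ k ih =>
        calc n ^ (k+1) * n.factorial = n * (n ^ k * n.factorial) := by ring
          _ ≤ n * (n + k).factorial := Nat.mul_le_mul_left _ ih
          _ ≤ (n + k + 1) * (n + k).factorial := by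
              apply Nat.mul_le_mul_right
              omega
          _ = (n + (k+1)).factorial := by rw [← Nat.add_assoc, Nat.factorial_succ]
    calc n.factorial * n ^ (n + k) = (n ^ k * n.factorial) * n ^ n := by
          rw [pow_add]; ring
      _ ≤ (n + k).factorial * n ^ n := Nat.mul_le_mul_right _ (claim k)


lemma perm_count_true (g : Fin N → Fin 3) :
    N.factorial
      = (univ.filter fun c : Fin N → Fin 3 => ∀ j, cnt c j = cnt g j).card
          * ∏ j, (cnt g j).factorial := by
  classical
  have hperm := perm_count (N := N) g (fun _ => True)
  simp only [and_true] at hperm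
  have h1 : (univ.filter fun e : Equiv.Perm (Fin N) =>
      (fun _ : Fin N → Fin 3 => True) (g ∘ e)) = univ :=
    Finset.filter_true_of_mem (fun _ _ => trivial)
  rw [h1, Finset.card_univ, Fintype.card_perm, Fintype.card_fin] at hperm
  exact hperm

lemma total_weight_one (ρ : Fin 3 → ℝ) (hρ1 : ∑ j, ρ j = 1) :
    ∑ c : Fin N → Fin 3, ∏ i, ρ (c i) = 1 := by
  classical
  have h := Finset.prod_univ_sum (fun _ : Fin N => (univ : Finset (Fin 3)))
    (fun _ u => ρ u)
  rw [Fintype.piFinset_univ] at h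
  rw [← h, hρ1]
  simp

lemma type_lower (hN : 0 < N) (g : Fin N → Fin 3) :
    (((N:ℝ)+1)^2)⁻¹ ≤
      ∑ c ∈ univ.filter (fun c : Fin N → Fin 3 => ∀ j, cnt c j = cnt g j),
        ∏ i, ((cnt g (c i) : ℝ)/N) := by
  classical
  set ρ : Fin 3 → ℝ := fun j => (cnt g j : ℝ)/N with hρ
  have hNR : (0:ℝ) < N := by exact_mod_cast hN
  have hρ0 : ∀ j, 0 ≤ ρ j := fun j => by positivity
  have hρ1 : ∑ j, ρ j = 1 := by
    rw [hρ, ← Finset.sum_div]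
    rw [show ∑ j, (cnt g j : ℝ) = ((∑ j, cnt g j : ℕ) : ℝ) by push_cast; rfl]
    rw [sum_cnt g, div_self (ne_of_gt hNR)]
  set cntv : (Fin N → Fin 3) → (Fin 3 → ℕ) := fun c j => cnt c j with hcntv
  set T : (Fin 3 → ℕ) → ℝ := fun v =>
    ∑ c ∈ univ.filter (fun c : Fin N → Fin 3 => cntv c = v), ∏ i, ρ (c i) with hT
  have hWnn : ∀ c : Fin N → Fin 3, 0 ≤ ∏ i, ρ (c i) := fun c =>
    Finset.prod_nonneg fun i _ => hρ0 _
  have hTnn : ∀ v, 0 ≤ T v := fun v => Finset.sum_nonneg fun c _ => hWnn c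
  -- the sum of T over the image of cntv is 1
  have htot : ∑ v ∈ Finset.image cntv univ, T v = 1 := by
    rw [hT]
    rw [Finset.sum_fiberwise_of_maps_to (g := cntv)
      (fun c _ => Finset.mem_image_of_mem cntv (Finset.mem_univ c))
      (fun c => ∏ i, ρ (c i))]
    exact total_weight_one ρ hρ1
  -- value of T on a type vector
  have hTval : ∀ v : Fin 3 → ℕ, T v =
      ((univ.filter (fun c : Fin N → Fin 3 => cntv c = v)).card : ℝ)
        * ∏ j, ρ j ^ (v j) := by
    intro v
    have hcongr : ∀ c ∈ univ.filter (fun c : Fin N → Fin 3 => cntv c = v),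
        ∏ i, ρ (c i) = ∏ j, ρ j ^ (v j) := by
      intro c hc
      rw [Finset.mem_filter] at hc
      rw [weight_eq ρ c]
      apply Finset.prod_congr rfl
      intro j _
      rw [show cnt c j = v j from congrFun hc.2 j]
    rw [hT]
    dsimp only
    rw [Finset.sum_congr rfl hcongr, Finset.sum_const, nsmul_eq_mul]
  -- the permutation count identity : card * ∏ (v j)! = N !
  have hcount : ∀ v ∈ Finset.image cntv univ,
      (univ.filter (fun c : Fin N → Fin 3 => cntv c = v)).card
        * ∏ j, (v j).factorial = N.factorial := by
    intro v hv
    obtain ⟨c₀, _, hc₀⟩ := Finset.mem_image.mp hv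
    have hfilter : (univ.filter (fun c : Fin N → Fin 3 => cntv c = v))
        = univ.filter (fun c : Fin N → Fin 3 => ∀ j, cnt c j = cnt c₀ j) := by
      apply Finset.filter_congr
      intro c _
      constructor
      · intro h j
        rw [show cnt c j = v j from congrFun h j, ← hc₀]
      · intro h
        funext j
        show cnt c j = v j
        rw [h j]
        exact congrFun hc₀ j
    have hperm := perm_count_true (N := N) c₀
    rw [hfilter]
    rw [show ∏ j, (v j).factorial = ∏ j, (cnt c₀ j).factorial by
      apply Finset.prod_congr rfl
      intro j _
      rw [← hc₀]]
    exact hperm.symm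
  have hsumv : ∀ v ∈ Finset.image cntv univ, ∑ j, v j = N := by
    intro v hv
    obtain ⟨c₀, _, hc₀⟩ := Finset.mem_image.mp hv
    rw [← hc₀]
    exact sum_cnt c₀
  have hvle : ∀ v ∈ Finset.image cntv univ, ∀ j, v j ≤ N := by
    intro v hv j
    obtain ⟨c₀, _, hc₀⟩ := Finset.mem_image.mp hv
    rw [← hc₀]
    exact cnt_le c₀ j
  have hng : cntv g ∈ Finset.image cntv univ :=
    Finset.mem_image_of_mem cntv (Finset.mem_univ g)
  -- maximality of the true type
  have hTmax : ∀ v ∈ Finset.image cntv univ, T v ≤ T (cntv g) := by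
    intro v hv
    set A := (univ.filter (fun c : Fin N → Fin 3 => cntv c = v)).card with hA
    set B := (univ.filter (fun c : Fin N → Fin 3 => cntv c = cntv g)).card with hB
    -- natural number inequality
    have hnat : A * ∏ j, (cnt g j) ^ (v j) ≤ B * ∏ j, (cnt g j) ^ (cnt g j) := by
      have hM : 0 < (∏ j, (v j).factorial) * ∏ j, (cnt g j).factorial := by
        apply Nat.mul_pos <;> exact Finset.prod_pos (fun j _ => Nat.factorial_pos _)
      apply Nat.le_of_mul_le_mul_right _ hM
      have lhs_eq : A * (∏ j, (cnt g j) ^ (v j)) *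
            ((∏ j, (v j).factorial) * ∏ j, (cnt g j).factorial)
          = N.factorial * ∏ j, ((cnt g j).factorial * (cnt g j) ^ (v j)) := by
        rw [← hcount v hv, Finset.prod_mul_distrib]
        ring
      have rhs_eq : B * (∏ j, (cnt g j) ^ (cnt g j)) *
            ((∏ j, (v j).factorial) * ∏ j, (cnt g j).factorial)
          = N.factorial * ∏ j, ((v j).factorial * (cnt g j) ^ (cnt g j)) := by
        rw [← hcount (cntv g) hng, Finset.prod_mul_distrib]
        have : ∀ j, cntv g j = cnt g j := fun j => rfl
        simp only [this]
        ring
      rw [lhs_eq, rhs_eq]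
      apply Nat.mul_le_mul_left
      apply Finset.prod_le_prod'
      intro j _
      exact nat_fact_pow (cnt g j) (v j)
    -- convert to the real inequality
    have hprodv : ∏ j, ρ j ^ (v j) = (∏ j, (cnt g j : ℝ) ^ (v j)) / (N:ℝ)^N := by
      rw [hρ]
      simp only [div_pow]
      rw [Finset.prod_div_distrib]
      congr 1
      rw [Finset.prod_pow_eq_pow_sum, hsumv v hv]
    have hprodn : ∏ j, ρ j ^ (cnt g j) = (∏ j, (cnt g j : ℝ) ^ (cnt g j)) / (N:ℝ)^N := by
      rw [hρ]
      simp only [div_pow]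
      rw [Finset.prod_div_distrib]
      congr 1
      rw [Finset.prod_pow_eq_pow_sum, hsumv (cntv g) hng]
    rw [hTval v, hTval (cntv g), hprodv]
    have hcng : ∀ j, cntv g j = cnt g j := fun j => rfl
    simp only [hcng]
    rw [hprodn]
    rw [mul_div_assoc', mul_div_assoc']
    apply (div_le_div_iff_of_pos_right (by positivity : (0:ℝ) < (N:ℝ)^N)).mpr
    exact_mod_cast hnat
  -- cardinality of the image
  have himg : (Finset.image cntv univ).card ≤ (N+1)^2 := by
    have hinj := Finset.card_le_card_of_injOn
      (s := Finset.image cntv univ)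
      (f := fun v : Fin 3 → ℕ => (v 0, v 1))
      (t := Finset.range (N+1) ×ˢ Finset.range (N+1))
      (fun v hv => by
        rw [Finset.mem_coe, Finset.mem_product, Finset.mem_range, Finset.mem_range]
        exact ⟨Nat.lt_succ_of_le (hvle v hv 0), Nat.lt_succ_of_le (hvle v hv 1)⟩)
      (fun v hv v' hv' h => by
        have h0 : v 0 = v' 0 := congrArg Prod.fst h
        have h1 : v 1 = v' 1 := congrArg Prod.snd h
        have hs : v 0 + v 1 + v 2 = v' 0 + v' 1 + v' 2 := by
          have e1 := hsumv v hv
          have e2 := hsumv v' hv'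
          rw [Fin.sum_univ_three] at e1 e2
          omega
        funext j
        fin_cases j
        · exact h0
        · exact h1
        · show v 2 = v' 2
          omega)
    calc (Finset.image cntv univ).card
        ≤ (Finset.range (N+1) ×ˢ Finset.range (N+1)).card := hinj
      _ = (N+1)^2 := by rw [Finset.card_product, Finset.card_range]; ring
  -- conclude
  have h1 : (1:ℝ) ≤ ((N:ℝ)+1)^2 * T (cntv g) := by
    calc (1:ℝ) = ∑ v ∈ Finset.image cntv univ, T v := htot.symm
      _ ≤ ∑ _v ∈ Finset.image cntv univ, T (cntv g) :=
          Finset.sum_le_sum hTmax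
      _ = ((Finset.image cntv univ).card : ℝ) * T (cntv g) := by
          rw [Finset.sum_const, nsmul_eq_mul]
      _ ≤ ((N:ℝ)+1)^2 * T (cntv g) := by
          apply mul_le_mul_of_nonneg_right _ (hTnn _)
          have : ((Finset.image cntv univ).card : ℝ) ≤ ((N+1:ℕ):ℝ)^2 := by
            exact_mod_cast himg
          calc ((Finset.image cntv univ).card : ℝ) ≤ ((N+1:ℕ):ℝ)^2 := this
            _ = ((N:ℝ)+1)^2 := by push_cast; ring
  have hfinal : (((N:ℝ)+1)^2)⁻¹ ≤ T (cntv g) := by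
    rw [inv_eq_one_div, div_le_iff₀ (by positivity : (0:ℝ) < ((N:ℝ)+1)^2)]
    nlinarith [h1]
  calc (((N:ℝ)+1)^2)⁻¹ ≤ T (cntv g) := hfinal
    _ = _ := by
      rw [hT]
      apply Finset.sum_congr
      · apply Finset.filter_congr
        intro c _
        constructor
        · intro h j
          exact congrFun h j
        · intro h
          funext j
          exact h j
      · intro c _
        rfl


/-- Bound on the number of bad permutations. -/
lemma perm_ratio {d : ℕ} (hN : 0 < N) (hd : 0 < d) (σ : Fin d → Fin N → Fin N)
    (hσ : ∀ t i, σ t (σ t i) = i) (hσ' : ∀ t i, σ t i ≠ i)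
    (g : Fin N → Fin 3) (y : Fin 3) (ε : ℝ) (hε : 0 < ε) :
    ((univ.filter fun e : Equiv.Perm (Fin N) => ε <
        |(1/(N:ℝ)) * (∑ t : Fin d, ∑ i : Fin N,
            (if (g ∘ e) i = 0 then (1:ℝ) else 0) *
              (if (g ∘ e) (σ t i) = (y : Fin 3) then (1:ℝ) else 0))
          - (d:ℝ) * (((cnt g 0 : ℝ)/(N:ℝ)) * ((cnt g y : ℝ)/(N:ℝ)))|).card : ℝ)
      ≤ ((N:ℝ)+1)^2 * (2 * d * Real.exp (-(ε^2/(d:ℝ)^2) * N / 10))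
          * (N.factorial : ℝ) := by
  classical
  set ρ : Fin 3 → ℝ := fun j => (cnt g j : ℝ)/(N:ℝ) with hρ
  have hNR : (0:ℝ) < N := by exact_mod_cast hN
  have hρ0 : ∀ j, 0 ≤ ρ j := fun j => by positivity
  have hρ1 : ∑ j, ρ j = 1 := by
    rw [hρ, ← Finset.sum_div]
    rw [show ∑ j, (cnt g j : ℝ) = ((∑ j, cnt g j : ℕ) : ℝ) by push_cast; rfl]
    rw [sum_cnt g, div_self (ne_of_gt hNR)]
  set P : (Fin N → Fin 3) → Prop := fun c => ε <
      |(1/(N:ℝ)) * (∑ t : Fin d, ∑ i : Fin N,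
          (if c i = (0 : Fin 3) then (1:ℝ) else 0) *
            (if c (σ t i) = (y : Fin 3) then (1:ℝ) else 0))
        - (d:ℝ) * (ρ 0 * ρ y)| with hP
  have hcount := perm_count (N := N) g P
  have hcounttrue := perm_count_true (N := N) g
  set wgt : ℝ := ∏ j, ρ j ^ (cnt g j) with hwgt
  set B := (univ.filter fun c : Fin N → Fin 3 =>
    (∀ j, cnt c j = cnt g j) ∧ P c).card with hB
  set numC := (univ.filter fun c : Fin N → Fin 3 => ∀ j, cnt c j = cnt g j).card
    with hnumC
  set F := ∏ j, (cnt g j).factorial with hF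
  -- constant weight on the type class
  have hconst : ∀ c : Fin N → Fin 3, (∀ j, cnt c j = cnt g j) →
      ∏ i, ρ (c i) = wgt := by
    intro c hc
    rw [weight_eq ρ c, hwgt]
    apply Finset.prod_congr rfl
    intro j _
    rw [hc j]
  -- B * wgt is at most the full bad-coloring weight
  have hBw : (B : ℝ) * wgt ≤ 2 * d * Real.exp (-(ε^2/(d:ℝ)^2) * N / 10) := by
    have hsub : (univ.filter fun c : Fin N → Fin 3 =>
        (∀ j, cnt c j = cnt g j) ∧ P c) ⊆ (univ.filter fun c : Fin N → Fin 3 => P c) := by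
      intro c hc
      rw [Finset.mem_filter] at hc ⊢
      exact ⟨hc.1, hc.2.2⟩
    have h1 : ∑ c ∈ univ.filter (fun c : Fin N → Fin 3 =>
        (∀ j, cnt c j = cnt g j) ∧ P c), ∏ i, ρ (c i)
        = (B : ℝ) * wgt := by
      have e1 : ∀ c ∈ univ.filter (fun c : Fin N → Fin 3 =>
          (∀ j, cnt c j = cnt g j) ∧ P c), ∏ i, ρ (c i) = wgt := by
        intro c hc
        rw [Finset.mem_filter] at hc
        exact hconst c hc.2.1
      rw [Finset.sum_congr rfl e1, Finset.sum_const, nsmul_eq_mul, hB]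
    have h2 : ∑ c ∈ univ.filter (fun c : Fin N → Fin 3 =>
        (∀ j, cnt c j = cnt g j) ∧ P c), ∏ i, ρ (c i)
        ≤ ∑ c ∈ univ.filter (fun c : Fin N → Fin 3 => P c), ∏ i, ρ (c i) :=
      Finset.sum_le_sum_of_subset_of_nonneg hsub
        (fun c _ _ => Finset.prod_nonneg fun i _ => hρ0 _)
    have h3 := coloring_bound (N := N) hN hd σ hσ hσ' ρ hρ0 hρ1 0 y ε hε
    rw [h1] at h2
    exact le_trans h2 h3
  -- numC * wgt is at least (N+1)^(-2)
  have hTlow : (((N:ℝ)+1)^2)⁻¹ ≤ (numC : ℝ) * wgt := by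
    have h1 := type_lower (N := N) hN g
    have h2 : ∑ c ∈ univ.filter (fun c : Fin N → Fin 3 => ∀ j, cnt c j = cnt g j),
        ∏ i, ((cnt g (c i) : ℝ)/(N:ℝ)) = (numC : ℝ) * wgt := by
      have e2 : ∀ c ∈ univ.filter (fun c : Fin N → Fin 3 => ∀ j, cnt c j = cnt g j),
          ∏ i, ((cnt g (c i) : ℝ)/(N:ℝ)) = wgt := by
        intro c hc
        rw [Finset.mem_filter] at hc
        exact hconst c hc.2
      rw [Finset.sum_congr rfl e2, Finset.sum_const, nsmul_eq_mul, hnumC]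
    rw [h2] at h1
    exact h1
  -- assemble
  have hwgt0 : 0 ≤ wgt := Finset.prod_nonneg fun j _ => pow_nonneg (hρ0 j) _
  set card := (univ.filter fun e : Equiv.Perm (Fin N) => P (g ∘ e)).card with hcard
  have hcardR : (card : ℝ) = (B : ℝ) * F := by exact_mod_cast hcount
  have hNfR : (N.factorial : ℝ) = (numC : ℝ) * F := by exact_mod_cast hcounttrue
  have key : (card : ℝ) * (((N:ℝ)+1)^2)⁻¹
      ≤ (2 * d * Real.exp (-(ε^2/(d:ℝ)^2) * N / 10)) * N.factorial := by
    calc (card : ℝ) * (((N:ℝ)+1)^2)⁻¹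
        ≤ (card : ℝ) * ((numC : ℝ) * wgt) :=
          mul_le_mul_of_nonneg_left hTlow (Nat.cast_nonneg card)
      _ = ((B:ℝ) * wgt) * ((numC : ℝ) * (F:ℝ)) := by
          rw [hcardR]; ring
      _ = ((B:ℝ) * wgt) * (N.factorial : ℝ) := by rw [← hNfR]
      _ ≤ (2 * d * Real.exp (-(ε^2/(d:ℝ)^2) * N / 10)) * (N.factorial : ℝ) :=
          mul_le_mul_of_nonneg_right hBw (Nat.cast_nonneg _)
  have hpos : (0:ℝ) < ((N:ℝ)+1)^2 := by positivity
  have final : (card : ℝ) ≤ ((N:ℝ)+1)^2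
      * (2 * d * Real.exp (-(ε^2/(d:ℝ)^2) * N / 10)) * (N.factorial : ℝ) := by
    have := mul_le_mul_of_nonneg_right key (le_of_lt hpos)
    calc (card : ℝ) = (card : ℝ) * (((N:ℝ)+1)^2)⁻¹ * ((N:ℝ)+1)^2 := by
          field_simp
      _ ≤ (2 * d * Real.exp (-(ε^2/(d:ℝ)^2) * N / 10)) * (N.factorial : ℝ)
            * ((N:ℝ)+1)^2 := this
      _ = ((N:ℝ)+1)^2 * (2 * d * Real.exp (-(ε^2/(d:ℝ)^2) * N / 10))
            * (N.factorial : ℝ) := by ring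
  exact final

/-- Absorbing the polynomial factor into the exponential. -/
lemma absorb {d : ℕ} (hd : 0 < d) (ε : ℝ) (hε : 0 < ε) :
    ∃ C > (0:ℝ), ∃ c > (0:ℝ), ∀ N : ℕ,
      ((N:ℝ)+1)^2 * (2 * d * Real.exp (-(ε^2/(d:ℝ)^2) * N / 10))
        ≤ C * Real.exp (-c * N) := by
  have hdR : (0:ℝ) < d := by exact_mod_cast hd
  set a : ℝ := ε^2/(40 * d^2) with ha
  have ha0 : 0 < a := by positivity
  set c : ℝ := ε^2/(20 * d^2) with hc
  have hc0 : 0 < c := by positivity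
  set C : ℝ := 2 * d * (Real.exp a / a)^2 with hC
  have hC0 : 0 < C := by positivity
  refine ⟨C, hC0, c, hc0, fun N => ?_⟩
  have hN1 : (0:ℝ) ≤ (N:ℝ) + 1 := by positivity
  have hexp0 : (N:ℝ) + 1 ≤ (Real.exp a / a) * Real.exp (a * N) := by
    have h := Real.add_one_le_exp (a * ((N:ℝ)+1))
    have h2 : a * ((N:ℝ)+1) ≤ Real.exp (a * ((N:ℝ)+1)) := by linarith
    have h3 : Real.exp (a * ((N:ℝ)+1)) = Real.exp a * Real.exp (a * N) := by
      rw [← Real.exp_add]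
      ring_nf
    rw [h3] at h2
    rw [div_mul_eq_mul_div, le_div_iff₀ ha0]
    linarith [h2]
  have hsq : ((N:ℝ)+1)^2 ≤ ((Real.exp a / a) * Real.exp (a * N))^2 :=
    pow_le_pow_left₀ hN1 hexp0 2
  have hrhs : ((Real.exp a / a) * Real.exp (a * N))^2
      = (Real.exp a / a)^2 * Real.exp (2 * a * N) := by
    rw [mul_pow, pow_two (Real.exp (a * N)), ← Real.exp_add,
      show a * N + a * N = 2 * a * N by ring]
  rw [hrhs] at hsq
  have hmul : ((N:ℝ)+1)^2 * (2 * d * Real.exp (-(ε^2/(d:ℝ)^2) * N / 10))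
      ≤ ((Real.exp a / a)^2 * Real.exp (2 * a * N))
          * (2 * d * Real.exp (-(ε^2/(d:ℝ)^2) * N / 10)) := by
    apply mul_le_mul_of_nonneg_right hsq
    positivity
  have hE : 2*a*(N:ℝ) + (-(ε^2/(d:ℝ)^2) * N / 10) = -c*N := by
    rw [ha, hc]
    field_simp
    ring
  calc ((N:ℝ)+1)^2 * (2 * d * Real.exp (-(ε^2/(d:ℝ)^2) * N / 10))
      ≤ ((Real.exp a / a)^2 * Real.exp (2 * a * N))
          * (2 * d * Real.exp (-(ε^2/(d:ℝ)^2) * N / 10)) := hmul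
    _ = (2 * d * (Real.exp a / a)^2)
          * (Real.exp (2 * a * N) * Real.exp (-(ε^2/(d:ℝ)^2) * N / 10)) := by ring
    _ = C * Real.exp (-c*N) := by rw [← Real.exp_add, hE, hC]

end GapAux

/-- Theorem 4.3 of the paper (convergence on the line of the gap process): for
every `ε > 0` there are constants `C, c > 0`, depending only on `ε` and the
degree `d`, such that for any `N`, `K`, count vector `n` summing to `N`,
arrangement `w` with fibers of sizes `n`, fixed-point-free involutions
`σ 1, …, σ d` of `Fin N` (perfect matchings), and `V = w ∘ π` with `π` a
uniform random permutation of `Fin N`, the quadratic interaction count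
`Q_{m,ℓ}(V) = (1/N) ∑ t, ∑ i, 1{V i = m} 1{V (σ t i) = ℓ}` satisfies
`P(|Q_{m,ℓ}(V) − d (n m / N) (n ℓ / N)| > ε) ≤ C exp (−c N)` for all `m, ℓ`. -/
theorem gap_process_concentration_on_the_line
    (d : ℕ) (hd : 0 < d) (ε : ℝ) (hε : 0 < ε) :
    ∃ C > (0 : ℝ), ∃ c > (0 : ℝ),
      ∀ (N K : ℕ), 0 < N → 0 < K →
      ∀ (σ : Fin d → Fin N → Fin N),
        (∀ t i, σ t (σ t i) = i) → (∀ t i, σ t i ≠ i) →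
      ∀ (n : Fin K → ℕ), (∑ k, n k) = N →
      ∀ (w : Fin N → Fin K),
        (∀ k, (Finset.univ.filter fun i => w i = k).card = n k) →
      ∀ (Ω : Type) (_ : MeasurableSpace Ω) (μ : Measure Ω),
        IsProbabilityMeasure μ →
      ∀ (π : Ω → Equiv.Perm (Fin N)) (V : Ω → Fin N → Fin K),
        (∀ e : Equiv.Perm (Fin N), MeasurableSet {ω | π ω = e}) →
        -- `π` is a uniformly distributed random permutation:
        (∀ e : Equiv.Perm (Fin N),
          μ {ω | π ω = e} = ((Fintype.card (Equiv.Perm (Fin N)) : ℝ≥0∞))⁻¹) →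
        -- `V` is distributed as `w ∘ π`:
        (∀ ω i, V ω i = w (π ω i)) →
      ∀ m ℓ : Fin K,
        μ {ω | ε <
            |((1 / (N : ℝ)) * ∑ t : Fin d, ∑ i : Fin N,
                (if V ω i = m then (1 : ℝ) else 0) *
                  (if V ω (σ t i) = ℓ then (1 : ℝ) else 0)) -
              (d : ℝ) * ((n m : ℝ) / (N : ℝ)) * ((n ℓ : ℝ) / (N : ℝ))|} ≤
          ENNReal.ofReal (C * Real.exp (-c * N)) := by

  classical
  obtain ⟨C, hC0, c, hc0, habs⟩ := GapAux.absorb hd ε hε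
  refine ⟨C, hC0, c, hc0, ?_⟩
  intro N K hN hK σ hσ hσ' n hn w hw Ω _ μ hμ π V hmeas huni hV m ℓ
  set y : Fin 3 := if m = ℓ then 0 else 1 with hy
  set g : Fin N → Fin 3 := fun i => if w i = m then 0 else if w i = ℓ then 1 else 2
    with hg
  have hiff0 : ∀ x : Fin N, w x = m ↔ g x = 0 := by
    intro x
    rw [hg]
    by_cases h1 : w x = m
    · simp [h1]
    · by_cases h2 : w x = ℓ <;> simp [h1, h2]
  have hiffy : ∀ x : Fin N, w x = ℓ ↔ g x = y := by
    intro x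
    by_cases hml : m = ℓ
    · rw [hy, if_pos hml]
      rw [show (w x = ℓ) ↔ (w x = m) by rw [hml]]
      exact hiff0 x
    · rw [hy, if_neg hml, hg]
      by_cases h1 : w x = m
      · have h2 : w x ≠ ℓ := by rw [h1]; exact fun hh => hml hh
        simp [h1, h2, hml]
      · have hlm : ¬ ℓ = m := fun hh => hml hh.symm
        by_cases h2 : w x = ℓ
        · simp [h1, h2, hlm, hml]
        · simp [h1, h2, hlm, hml]
  have hcnt0 : GapAux.cnt g 0 = n m := by
    have hfe : (Finset.univ.filter fun i : Fin N => g i = 0)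
        = Finset.univ.filter fun i : Fin N => w i = m :=
      Finset.filter_congr (fun i _ => (hiff0 i).symm)
    rw [GapAux.cnt, hfe, hw m]
  have hcnty : GapAux.cnt g y = n ℓ := by
    have hfe : (Finset.univ.filter fun i : Fin N => g i = y)
        = Finset.univ.filter fun i : Fin N => w i = ℓ :=
      Finset.filter_congr (fun i _ => (hiffy i).symm)
    rw [GapAux.cnt, hfe, hw ℓ]
  -- the bad set of permutations
  set S : Finset (Equiv.Perm (Fin N)) :=
    Finset.univ.filter fun e : Equiv.Perm (Fin N) => ε <
        |(1/(N:ℝ)) * (∑ t : Fin d, ∑ i : Fin N,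
            (if (g ∘ e) i = 0 then (1:ℝ) else 0) *
              (if (g ∘ e) (σ t i) = (y : Fin 3) then (1:ℝ) else 0))
          - (d:ℝ) * (((GapAux.cnt g 0 : ℝ)/(N:ℝ)) * ((GapAux.cnt g y : ℝ)/(N:ℝ)))|
    with hS
  -- rewriting the random expression
  have hexpr : ∀ ω : Ω,
      ((1 / (N : ℝ)) * ∑ t : Fin d, ∑ i : Fin N,
          (if V ω i = m then (1 : ℝ) else 0) *
            (if V ω (σ t i) = ℓ then (1 : ℝ) else 0)) -
        (d : ℝ) * ((n m : ℝ) / (N : ℝ)) * ((n ℓ : ℝ) / (N : ℝ))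
      = (1/(N:ℝ)) * (∑ t : Fin d, ∑ i : Fin N,
            (if g (π ω i) = 0 then (1:ℝ) else 0) *
              (if g (π ω (σ t i)) = (y : Fin 3) then (1:ℝ) else 0))
          - (d:ℝ) * (((GapAux.cnt g 0 : ℝ)/(N:ℝ)) * ((GapAux.cnt g y : ℝ)/(N:ℝ))) := by
    intro ω
    rw [hcnt0, hcnty]
    have hind : ∀ (t : Fin d) (i : Fin N),
        (if V ω i = m then (1:ℝ) else 0) * (if V ω (σ t i) = ℓ then (1:ℝ) else 0)
        = (if g (π ω i) = 0 then (1:ℝ) else 0) *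
            (if g (π ω (σ t i)) = (y : Fin 3) then (1:ℝ) else 0) := by
      intro t i
      rw [hV ω i, hV ω (σ t i)]
      exact congrArg₂ (· * ·) (if_congr (hiff0 _) rfl rfl) (if_congr (hiffy _) rfl rfl)
    simp_rw [hind]
    ring
  -- the event as a finite union
  have hEvent : {ω | ε <
      |((1 / (N : ℝ)) * ∑ t : Fin d, ∑ i : Fin N,
          (if V ω i = m then (1 : ℝ) else 0) *
            (if V ω (σ t i) = ℓ then (1 : ℝ) else 0)) -
        (d : ℝ) * ((n m : ℝ) / (N : ℝ)) * ((n ℓ : ℝ) / (N : ℝ))|}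
      = ⋃ e ∈ S, {ω | π ω = e} := by
    ext ω
    simp only [Set.mem_setOf_eq, Set.mem_iUnion]
    constructor
    · intro h
      refine ⟨π ω, ?_, rfl⟩
      rw [hS, Finset.mem_filter]
      refine ⟨Finset.mem_univ _, ?_⟩
      rw [hexpr ω] at h
      exact h
    · rintro ⟨e, he, hpe⟩
      have hpe' : π ω = e := hpe
      rw [hS, Finset.mem_filter] at he
      rw [hexpr ω]
      rw [hpe']
      exact he.2
  -- disjointness
  have hdisj : (↑S : Set (Equiv.Perm (Fin N))).PairwiseDisjoint
      (fun e => {ω | π ω = e}) := by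
    intro e1 _ e2 _ hne
    rw [Function.onFun, Set.disjoint_left]
    intro ω h1 h2
    have h1' : π ω = e1 := h1
    have h2' : π ω = e2 := h2
    exact hne (h1'.symm.trans h2')
  -- compute the measure
  have hmeasE : μ {ω | ε <
      |((1 / (N : ℝ)) * ∑ t : Fin d, ∑ i : Fin N,
          (if V ω i = m then (1 : ℝ) else 0) *
            (if V ω (σ t i) = ℓ then (1 : ℝ) else 0)) -
        (d : ℝ) * ((n m : ℝ) / (N : ℝ)) * ((n ℓ : ℝ) / (N : ℝ))|}
      = (S.card : ℝ≥0∞) * ((N.factorial : ℝ≥0∞))⁻¹ := by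
    rw [hEvent, measure_biUnion_finset hdisj (fun e _ => hmeas e)]
    have hval : ∀ e ∈ S, μ {ω | π ω = e} = ((N.factorial : ℝ≥0∞))⁻¹ := by
      intro e _
      rw [huni e, Fintype.card_perm, Fintype.card_fin]
    rw [Finset.sum_congr rfl hval, Finset.sum_const, nsmul_eq_mul]
  rw [hmeasE]
  -- real-valued bound on the cardinality
  have hreal : (S.card : ℝ) ≤ (C * Real.exp (-c * N)) * (N.factorial : ℝ) := by
    have h1 := GapAux.perm_ratio (N := N) hN hd σ hσ hσ' g y ε hε
    have h2 := habs N
    calc (S.card : ℝ)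
        ≤ ((N:ℝ)+1)^2 * (2 * d * Real.exp (-(ε^2/(d:ℝ)^2) * N / 10))
            * (N.factorial : ℝ) := h1
      _ ≤ (C * Real.exp (-c * N)) * (N.factorial : ℝ) :=
          mul_le_mul_of_nonneg_right h2 (Nat.cast_nonneg _)
  -- move to ℝ≥0∞
  have hCexp0 : (0:ℝ) ≤ C * Real.exp (-c * N) := by positivity
  have hfac0 : ((N.factorial : ℝ≥0∞)) ≠ 0 := by
    exact_mod_cast Nat.cast_ne_zero.mpr (Nat.factorial_ne_zero N)
  have hfactop : ((N.factorial : ℝ≥0∞)) ≠ ⊤ := ENNReal.natCast_ne_top _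
  have hupper : (S.card : ℝ≥0∞)
      ≤ ENNReal.ofReal (C * Real.exp (-c * N)) * (N.factorial : ℝ≥0∞) := by
    calc (S.card : ℝ≥0∞) = ENNReal.ofReal ((S.card : ℝ)) := by
          rw [ENNReal.ofReal_natCast]
      _ ≤ ENNReal.ofReal ((C * Real.exp (-c * N)) * (N.factorial : ℝ)) :=
          ENNReal.ofReal_le_ofReal hreal
      _ = ENNReal.ofReal (C * Real.exp (-c * N))
            * ENNReal.ofReal ((N.factorial : ℝ)) := ENNReal.ofReal_mul hCexp0
      _ = ENNReal.ofReal (C * Real.exp (-c * N)) * (N.factorial : ℝ≥0∞) := by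
          rw [ENNReal.ofReal_natCast]
  calc (S.card : ℝ≥0∞) * ((N.factorial : ℝ≥0∞))⁻¹
      ≤ (ENNReal.ofReal (C * Real.exp (-c * N)) * (N.factorial : ℝ≥0∞))
          * ((N.factorial : ℝ≥0∞))⁻¹ := mul_le_mul_left hupper _
    _ = ENNReal.ofReal (C * Real.exp (-c * N))
          * ((N.factorial : ℝ≥0∞) * ((N.factorial : ℝ≥0∞))⁻¹) := by rw [mul_assoc]
    _ = ENNReal.ofReal (C * Real.exp (-c * N)) := by
        rw [ENNReal.mul_inv_cancel hfac0 hfactop, mul_one]
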